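/- arXiv:1206.3404 — 2 statements merged into one kernel-verified Lean document; each statement's English description precedes it below -/
import Mathlib

section
/- Let S(D) = (δ + |D|)^(p-2) D for 2×2 symmetric matrices D, with δ > 0 and p ∈ (1,2]. Then for all 2×2 symmetric matrices A, B there exist constants c₀, c₁ > 0 depending only on p (not on δ) such that c₀ (δ + |A| + |B|)^(p-2) |A - B|² ≤ (S(A) - S(B)) : (A - B) ≤ c₁ (δ + |A| + |B|)^(p-2) |A - B|², where : denotes the Frobenius inner product and |·| the Frobenius norm. -/
open Real

/-- Frobenius norm of a 2×2 real matrix. -/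
noncomputable def frob (A : Fin 2 → Fin 2 → ℝ) : ℝ :=
  Real.sqrt (∑ i, ∑ j, (A i j) ^ 2)

/-- Frobenius inner product `A : B`. -/
def mdot (A B : Fin 2 → Fin 2 → ℝ) : ℝ := ∑ i, ∑ j, A i j * B i j

/-- The extra stress tensor `S(D) = (δ + |D|)^(p-2) D`. -/
noncomputable def stressS (δ p : ℝ) (D : Fin 2 → Fin 2 → ℝ) : Fin 2 → Fin 2 → ℝ :=
  fun i j => (δ + frob D) ^ (p - 2) * D i j

/-- Core scalar estimates for `s(t) = (δ+t)^(p-2) t` with `b ≤ a`. -/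
lemma scalar_bounds {p δ a b : ℝ} (hp1 : 1 < p) (hp2 : p ≤ 2) (hδ : 0 < δ)
    (hb : 0 ≤ b) (hba : b ≤ a) :
    (p - 1) * (δ + a) ^ (p-2) * (a - b) ≤ (δ+a)^(p-2)*a - (δ+b)^(p-2)*b ∧
    (δ+a)^(p-2)*a - (δ+b)^(p-2)*b ≤ 2 * (δ + a) ^ (p-2) * (a - b) := by
  set x := δ + a with hxdef
  set y := δ + b with hydef
  have hy : 0 < y := by positivity
  have hx : 0 < x := lt_of_lt_of_le hy (by simp [hxdef, hydef]; linarith)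
  have hxy : y ≤ x := by simp [hxdef, hydef]; linarith
  have h1 : x ^ (p-2) ≤ y ^ (p-2) := rpow_le_rpow_of_nonpos hy hxy (by linarith)
  have h2 : y ^ (p-1) ≤ x ^ (p-1) := rpow_le_rpow hy.le hxy (by linarith)
  have hx12 : x ^ (p-2) * x = x ^ (p-1) := by
    rw [← Real.rpow_add_one hx.ne']; ring_nf
  have hy12 : y ^ (p-2) * y = y ^ (p-1) := by
    rw [← Real.rpow_add_one hy.ne']; ring_nf
  have hxp2 : 0 < x ^ (p-2) := rpow_pos_of_pos hx _
  have hyp2 : 0 < y ^ (p-2) := rpow_pos_of_pos hy _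
  have hbern : y ^ (p-1) ≤ x ^ (p-1) - (p-1) * (x ^ (p-2) * (x - y)) := by
    have hr : y ^ (p-1) = (y/x) ^ (p-1) * x ^ (p-1) := by
      rw [Real.div_rpow hy.le hx.le]; field_simp
    have hber := rpow_one_add_le_one_add_mul_self (s := y/x - 1)
      (by have h := div_nonneg hy.le hx.le; linarith) (p := p-1) (by linarith) (by linarith)
    rw [show (1 : ℝ) + (y/x - 1) = y/x by ring] at hber
    have hmul := mul_le_mul_of_nonneg_right hber (le_of_lt (rpow_pos_of_pos hx (p-1)))
    rw [← hr] at hmul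
    have hxx : x ^ (p-1) / x = x ^ (p-2) := by
      rw [← Real.rpow_sub_one hx.ne']; ring_nf
    calc y ^ (p-1) ≤ (1 + (p-1)*(y/x - 1)) * x ^ (p-1) := hmul
      _ = x ^ (p-1) - (p-1) * (x ^ (p-2) * (x - y)) := by
          rw [← hxx]; field_simp; ring
  constructor
  · have hdel : δ * (x ^ (p-2)) ≤ δ * (y ^ (p-2)) := by nlinarith
    have ha : a = x - δ := by simp [hxdef]
    have hbb : b = y - δ := by simp [hydef]
    rw [ha, hbb]
    have hψ : (p-1) * (x ^ (p-2) * (x - y)) ≤ x ^ (p-1) - y ^ (p-1) := by linarith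
    nlinarith [hψ, hdel, hx12, hy12]
  · have hdel : δ * (x ^ (p-2)) ≤ δ * (y ^ (p-2)) := by nlinarith
    have ha : a = x - δ := by simp [hxdef]
    have hbb : b = y - δ := by simp [hydef]
    rw [ha, hbb]
    have hPA : x ^ (p-1) - y ^ (p-1) ≤ x ^ (p-2) * (x - y) := by
      nlinarith [mul_le_mul_of_nonneg_right h1 hy.le]
    have hPB : δ * (y ^ (p-2) - x ^ (p-2)) ≤ x ^ (p-2) * (x - y) := by
      have h3 : δ * (y ^ (p-2) - x ^ (p-2)) ≤ y * (y ^ (p-2) - x ^ (p-2)) := by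
        have hδy : δ ≤ y := by simp [hydef]; linarith
        nlinarith
      nlinarith [h2]
    nlinarith

/-- Pure-arithmetic core of the pair inequality. -/
lemma affine_core {p ψ φa φb a b m : ℝ} (hp1 : 1 < p) (hp2 : p ≤ 2)
    (hψ0 : 0 < ψ) (hψφa : ψ ≤ φa) (hψφb : ψ ≤ φb) (hφa2ψ : φa ≤ 2*ψ)
    (hb : 0 ≤ b) (hba : b ≤ a) (hm1 : -(a*b) ≤ m) (hm2 : m ≤ a*b)
    (hlo : (p-1) * φa * (a-b) ≤ φa*a - φb*b)
    (hhi : φa*a - φb*b ≤ 2 * φa * (a-b))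
    (hsa : φa * a ≤ ψ * (a+b)) (hsb : φb * b ≤ ψ * (a+b)) :
    (p-1) * ψ * (a^2+b^2-2*m) ≤ φa*a^2 + φb*b^2 - (φa+φb)*m ∧
    φa*a^2 + φb*b^2 - (φa+φb)*m ≤ 4 * ψ * (a^2+b^2-2*m) := by
  have ha : 0 ≤ b := hb
  have hab0 : (0:ℝ) ≤ a - b := by linarith
  have hab0' : (0:ℝ) ≤ a + b := by linarith
  have hpar_lo : (p-1) * ψ * (a-b)^2 ≤ (φa*a - φb*b)*(a-b) := by
    have s1 : (p-1)*ψ ≤ (p-1)*φa := mul_le_mul_of_nonneg_left hψφa (by linarith)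
    have s2 : (p-1)*ψ*(a-b) ≤ (p-1)*φa*(a-b) := mul_le_mul_of_nonneg_right s1 hab0
    have s3 : (p-1)*ψ*(a-b) ≤ φa*a - φb*b := by linarith
    have s4 := mul_le_mul_of_nonneg_right s3 hab0
    nlinarith [s4]
  have hpar_hi : (φa*a - φb*b)*(a-b) ≤ 4 * ψ * (a-b)^2 := by
    have s1 : 2*φa*(a-b) ≤ 4*ψ*(a-b) :=
      mul_le_mul_of_nonneg_right (by linarith) hab0
    have s3 : φa*a - φb*b ≤ 4*ψ*(a-b) := by linarith
    have s4 := mul_le_mul_of_nonneg_right s3 hab0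
    nlinarith [s4]
  have hanti_lo : (p-1) * ψ * (a+b)^2 ≤ (φa*a + φb*b)*(a+b) := by
    have t1 : ψ*a ≤ φa*a := mul_le_mul_of_nonneg_right hψφa (by linarith)
    have t2 : ψ*b ≤ φb*b := mul_le_mul_of_nonneg_right hψφb hb
    have t3 : ψ*(a+b) ≤ φa*a + φb*b := by linarith
    have t4 := mul_le_mul_of_nonneg_right t3 hab0'
    nlinarith [t4, mul_nonneg (mul_nonneg (by linarith : (0:ℝ) ≤ 2-p)
      hψ0.le) (sq_nonneg (a+b))]
  have hanti_hi : (φa*a + φb*b)*(a+b) ≤ 4 * ψ * (a+b)^2 := by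
    have t3 : φa*a + φb*b ≤ 2*(ψ*(a+b)) := by linarith
    have t4 := mul_le_mul_of_nonneg_right t3 hab0'
    nlinarith [t4, mul_nonneg (mul_nonneg hψ0.le hab0') hab0']
  constructor
  · rcases le_or_gt (2*(p-1)*ψ) (φa + φb) with hK | hK
    · have hprod := mul_nonneg (show (0:ℝ) ≤ φa + φb - 2*(p-1)*ψ by linarith)
        (show (0:ℝ) ≤ a*b - m by linarith)
      linarith [hpar_lo, hprod]
    · have hprod := mul_nonneg (show (0:ℝ) ≤ 2*(p-1)*ψ - (φa + φb) by linarith)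
        (show (0:ℝ) ≤ m + a*b by linarith)
      linarith [hanti_lo, hprod]
  · rcases le_or_gt (φa + φb) (8*ψ) with hK | hK
    · have hprod := mul_nonneg (show (0:ℝ) ≤ 8*ψ - (φa + φb) by linarith)
        (show (0:ℝ) ≤ a*b - m by linarith)
      linarith [hpar_hi, hprod]
    · have hprod := mul_nonneg (show (0:ℝ) ≤ (φa + φb) - 8*ψ by linarith)
        (show (0:ℝ) ≤ m + a*b by linarith)
      linarith [hanti_hi, hprod]

/-- The key scalar pair inequality. -/
lemma key_pair {p δ a b m : ℝ} (hp1 : 1 < p) (hp2 : p ≤ 2) (hδ : 0 < δ)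
    (hb : 0 ≤ b) (hba : b ≤ a) (hm1 : -(a*b) ≤ m) (hm2 : m ≤ a*b) :
    (p-1) * (δ+a+b)^(p-2) * (a^2+b^2-2*m) ≤
      (δ+a)^(p-2)*a^2 + (δ+b)^(p-2)*b^2 - ((δ+a)^(p-2)+(δ+b)^(p-2))*m ∧
    (δ+a)^(p-2)*a^2 + (δ+b)^(p-2)*b^2 - ((δ+a)^(p-2)+(δ+b)^(p-2))*m ≤
      4 * (δ+a+b)^(p-2) * (a^2+b^2-2*m) := by
  have ha : 0 ≤ a := le_trans hb hba
  obtain ⟨hlo, hhi⟩ := scalar_bounds hp1 hp2 hδ hb hba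
  have hψ0 : 0 < (δ+a+b)^(p-2) := rpow_pos_of_pos (by linarith) _
  have hψφa : (δ+a+b)^(p-2) ≤ (δ+a)^(p-2) :=
    rpow_le_rpow_of_nonpos (by linarith) (by linarith) (by linarith)
  have hψφb : (δ+a+b)^(p-2) ≤ (δ+b)^(p-2) :=
    rpow_le_rpow_of_nonpos (by linarith) (by linarith) (by linarith)
  -- φa ≤ 2 ψ
  have hφa2ψ : (δ+a)^(p-2) ≤ 2 * (δ+a+b)^(p-2) := by
    have h2x : (2*(δ+a)) ^ (p-2) ≤ (δ+a+b)^(p-2) :=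
      rpow_le_rpow_of_nonpos (by linarith) (by linarith) (by linarith)
    have hmul : (2*(δ+a)) ^ (p-2) = 2^(p-2) * (δ+a)^(p-2) :=
      Real.mul_rpow (by norm_num) (by linarith)
    have h2le : (2:ℝ)^(2-p) ≤ 2 := by
      calc (2:ℝ)^(2-p) ≤ (2:ℝ)^(1:ℝ) := rpow_le_rpow_of_exponent_le (by norm_num) (by linarith)
        _ = 2 := Real.rpow_one 2
    have h2pos : (0:ℝ) < (2:ℝ)^(2-p) := rpow_pos_of_pos (by norm_num) _
    have hinv : (2:ℝ)^(2-p) * (2:ℝ)^(p-2) = 1 := by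
      rw [← Real.rpow_add (by norm_num)]; norm_num
    have heq : (δ+a)^(p-2) = 2^(2-p) * ((2*(δ+a)) ^ (p-2)) := by
      rw [hmul, ← mul_assoc, hinv, one_mul]
    calc (δ+a)^(p-2) = 2^(2-p) * ((2*(δ+a)) ^ (p-2)) := heq
      _ ≤ 2^(2-p) * ((δ+a+b)^(p-2)) := mul_le_mul_of_nonneg_left h2x h2pos.le
      _ ≤ 2 * (δ+a+b)^(p-2) := mul_le_mul_of_nonneg_right h2le hψ0.le
  -- monotonicity of s(t) = (δ+t)^(p-2) t
  have h1 : (δ+a)^(p-1) ≤ (δ+a+b)^(p-1) :=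
    rpow_le_rpow (by linarith) (by linarith) (by linarith)
  have h1b : (δ+b)^(p-1) ≤ (δ+a+b)^(p-1) :=
    rpow_le_rpow (by linarith) (by linarith) (by linarith)
  have hx12 : (δ+a)^(p-2) * (δ+a) = (δ+a)^(p-1) := by
    rw [← Real.rpow_add_one (by positivity : (δ+a) ≠ 0)]; ring_nf
  have hX12 : (δ+a+b)^(p-2) * (δ+a+b) = (δ+a+b)^(p-1) := by
    rw [← Real.rpow_add_one (by positivity : (δ+a+b) ≠ 0)]; ring_nf
  have hy12 : (δ+b)^(p-2) * (δ+b) = (δ+b)^(p-1) := by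
    rw [← Real.rpow_add_one (by positivity : (δ+b) ≠ 0)]; ring_nf
  have hdψ : δ*((δ+a+b)^(p-2)) ≤ δ*((δ+a)^(p-2)) := mul_le_mul_of_nonneg_left hψφa hδ.le
  have hdψb : δ*((δ+a+b)^(p-2)) ≤ δ*((δ+b)^(p-2)) := mul_le_mul_of_nonneg_left hψφb hδ.le
  have hsa : (δ+a)^(p-2) * a ≤ (δ+a+b)^(p-2) * (a+b) := by linarith
  have hsb : (δ+b)^(p-2) * b ≤ (δ+a+b)^(p-2) * (a+b) := by linarith
  have hlo' : (p-1) * ((δ+a)^(p-2)) * (a-b) ≤ (δ+a)^(p-2)*a - (δ+b)^(p-2)*b := hlo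
  have hhi' : (δ+a)^(p-2)*a - (δ+b)^(p-2)*b ≤ 2 * ((δ+a)^(p-2)) * (a-b) := hhi
  exact affine_core hp1 hp2 hψ0 hψφa hψφb hφa2ψ hb hba hm1 hm2 hlo' hhi' hsa hsb

section MatrixFacts

lemma frob_nonneg (A : Fin 2 → Fin 2 → ℝ) : 0 ≤ frob A := Real.sqrt_nonneg _

lemma frob_sq (A : Fin 2 → Fin 2 → ℝ) : frob A ^ 2 = mdot A A := by
  rw [frob, Real.sq_sqrt (by positivity)]
  simp [mdot, Fin.sum_univ_two]; ring

lemma mdot_cs (A B : Fin 2 → Fin 2 → ℝ) : |mdot A B| ≤ frob A * frob B := by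
  have h2 : (mdot A B)^2 ≤ (mdot A A) * (mdot B B) := by
    simp only [mdot, Fin.sum_univ_two]
    nlinarith [sq_nonneg (A 0 0 * B 0 1 - A 0 1 * B 0 0),
      sq_nonneg (A 0 0 * B 1 0 - A 1 0 * B 0 0),
      sq_nonneg (A 0 0 * B 1 1 - A 1 1 * B 0 0),
      sq_nonneg (A 0 1 * B 1 0 - A 1 0 * B 0 1),
      sq_nonneg (A 0 1 * B 1 1 - A 1 1 * B 0 1),
      sq_nonneg (A 1 0 * B 1 1 - A 1 1 * B 1 0)]
  calc |mdot A B| = Real.sqrt ((mdot A B)^2) := (Real.sqrt_sq_eq_abs _).symm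
    _ ≤ Real.sqrt ((frob A * frob B)^2) := Real.sqrt_le_sqrt (by
        rw [mul_pow, frob_sq, frob_sq]; exact h2)
    _ = frob A * frob B := Real.sqrt_sq (mul_nonneg (frob_nonneg A) (frob_nonneg B))

lemma mdot_S_expand (δ p : ℝ) (A B : Fin 2 → Fin 2 → ℝ) :
    mdot (stressS δ p A - stressS δ p B) (A - B) =
      (δ + frob A)^(p-2) * mdot A A + (δ + frob B)^(p-2) * mdot B B
        - ((δ + frob A)^(p-2) + (δ + frob B)^(p-2)) * mdot A B := by
  simp only [mdot, stressS, Fin.sum_univ_two, Pi.sub_apply]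
  ring

lemma frob_sub_sq (A B : Fin 2 → Fin 2 → ℝ) :
    frob (A - B) ^ 2 = mdot A A + mdot B B - 2 * mdot A B := by
  rw [frob_sq]
  simp only [mdot, Fin.sum_univ_two, Pi.sub_apply]
  ring

end MatrixFacts

/-- Main estimate assuming `frob B ≤ frob A`. -/
lemma main_ordered {p : ℝ} (hp1 : 1 < p) (hp2 : p ≤ 2) {δ : ℝ} (hδ : 0 < δ)
    (A B : Fin 2 → Fin 2 → ℝ) (hba : frob B ≤ frob A) :
    (p-1) * (δ + frob A + frob B) ^ (p - 2) * (frob (A - B)) ^ 2 ≤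
        mdot (stressS δ p A - stressS δ p B) (A - B) ∧
      mdot (stressS δ p A - stressS δ p B) (A - B) ≤
        4 * (δ + frob A + frob B) ^ (p - 2) * (frob (A - B)) ^ 2 := by
  have hb : 0 ≤ frob B := frob_nonneg B
  have ha2 : mdot A A = frob A ^ 2 := (frob_sq A).symm
  have hb2 : mdot B B = frob B ^ 2 := (frob_sq B).symm
  have hcs := abs_le.mp (mdot_cs A B)
  have hm1 : -(frob A * frob B) ≤ mdot A B := by linarith [hcs.1]
  have hm2 : mdot A B ≤ frob A * frob B := hcs.2
  obtain ⟨hlo, hhi⟩ := key_pair hp1 hp2 hδ hb hba hm1 hm2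
  rw [mdot_S_expand, frob_sub_sq, ha2, hb2]
  exact ⟨hlo, hhi⟩

/-- For `p ∈ (1,2]` there are `c₀, c₁ > 0` depending only on `p` such that for all
`δ > 0` and all symmetric 2×2 matrices `A, B`,
`c₀ (δ+|A|+|B|)^(p-2)|A-B|² ≤ (S(A)-S(B)) : (A-B) ≤ c₁ (δ+|A|+|B|)^(p-2)|A-B|²`. -/
theorem stress_monotonicity_equivalence (p : ℝ) (hp1 : 1 < p) (hp2 : p ≤ 2) :
    ∃ c₀ c₁ : ℝ, 0 < c₀ ∧ 0 < c₁ ∧ ∀ δ : ℝ, 0 < δ →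
      ∀ A B : Fin 2 → Fin 2 → ℝ, (∀ i j, A i j = A j i) → (∀ i j, B i j = B j i) →
        c₀ * (δ + frob A + frob B) ^ (p - 2) * (frob (A - B)) ^ 2 ≤
            mdot (stressS δ p A - stressS δ p B) (A - B) ∧
          mdot (stressS δ p A - stressS δ p B) (A - B) ≤
            c₁ * (δ + frob A + frob B) ^ (p - 2) * (frob (A - B)) ^ 2 := by
  refine ⟨p - 1, 4, by linarith, by norm_num, fun δ hδ A B _ _ => ?_⟩
  rcases le_total (frob B) (frob A) with hba | hab
  · exact main_ordered hp1 hp2 hδ A B hba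
  · have h := main_ordered hp1 hp2 hδ B A hab
    have e1 : mdot (stressS δ p B - stressS δ p A) (B - A) =
        mdot (stressS δ p A - stressS δ p B) (A - B) := by
      simp only [mdot, stressS, Fin.sum_univ_two, Pi.sub_apply]; ring
    have e2 : frob (B - A) = frob (A - B) := by
      unfold frob
      congr 1
      simp only [Fin.sum_univ_two, Pi.sub_apply]; ring
    have e3 : δ + frob B + frob A = δ + frob A + frob B := by ring
    rw [e1, e2, e3] at h
    exact h
end

section
/- Let S(D) = (δ + |D|)^(p-2) D for 2×2 symmetric matrices, δ > 0, p ∈ (1,2]. Then there exist constants c₀, c₁ > 0 depending only on p such that for all symmetric A, B: c₀ (δ + |A| + |B|)^(p-2) |A - B| ≤ |S(A) - S(B)| ≤ c₁ (δ + |A| + |B|)^(p-2) |A - B|. -/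
open Real

noncomputable def Emb (A : Fin 2 → Fin 2 → ℝ) : EuclideanSpace ℝ (Fin 2 × Fin 2) :=
  (WithLp.equiv 2 _).symm fun x => A x.1 x.2

lemma Emb_sub (A B : Fin 2 → Fin 2 → ℝ) : Emb (A - B) = Emb A - Emb B := rfl

lemma Emb_stress (δ p : ℝ) (A : Fin 2 → Fin 2 → ℝ) :
    Emb (stressS δ p A) = (δ + frob A) ^ (p - 2) • Emb A := rfl

lemma frob_eq (A : Fin 2 → Fin 2 → ℝ) : frob A = ‖Emb A‖ := by
  simp [frob, Emb, EuclideanSpace.norm_eq, Fintype.sum_prod_type, Real.norm_eq_abs, sq_abs]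

lemma bern_neg {q s : ℝ} (hq1 : -1 ≤ q) (hq0 : q ≤ 0) (hs : 1 ≤ s) :
    1 + q * (s - 1) ≤ s ^ q := by
  have hs0 : (0:ℝ) < s := lt_of_lt_of_le one_pos hs
  have h1 : s ^ (-q) ≤ 1 + (-q) * (s - 1) := by
    have := rpow_one_add_le_one_add_mul_self (s := s - 1) (by linarith)
      (p := -q) (by linarith) (by linarith)
    simpa using this
  have hw : 0 < s ^ (-q) := rpow_pos_of_pos hs0 _
  have hq : s ^ q = (s ^ (-q))⁻¹ := by
    rw [← Real.rpow_neg hs0.le, neg_neg]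
  rw [hq]
  rcases le_or_gt (1 + q * (s - 1)) 0 with h | h
  · exact h.trans (by positivity)
  · rw [← one_div, le_div_iff₀ hw]
    nlinarith [sq_nonneg (q * (s - 1))]

lemma rpow_tangent_neg {q u v : ℝ} (hq1 : -1 ≤ q) (hq0 : q ≤ 0) (hv : 0 < v) (hvu : v ≤ u) :
    v ^ q - u ^ q ≤ (-q) * v ^ (q - 1) * (u - v) := by
  have hu : 0 < u := hv.trans_le hvu
  have hb : 1 + q * (u / v - 1) ≤ (u / v) ^ q :=
    bern_neg hq1 hq0 ((one_le_div hv).mpr hvu)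
  have hvq : 0 < v ^ q := rpow_pos_of_pos hv q
  have h2 : (u / v) ^ q * v ^ q = u ^ q := by
    rw [← Real.mul_rpow (by positivity) hv.le, div_mul_cancel₀ _ hv.ne']
  have h3 : v ^ (q - 1) * v = v ^ q := by
    rw [← Real.rpow_add_one hv.ne']; ring_nf
  have h4 : v ^ q * (u / v) = v ^ (q - 1) * u := by
    rw [← h3]; field_simp
  nlinarith [mul_le_mul_of_nonneg_right hb hvq.le]

lemma scalarL3 {p δ a b : ℝ} (hp1 : 1 < p) (hp2 : p ≤ 2) (hδ : 0 < δ) (hb : 0 ≤ b) (hab : b ≤ a) :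
    (p - 1) * (δ + a + b) ^ (p - 2) * (a - b) ≤ (δ + a) ^ (p - 2) * a - (δ + b) ^ (p - 2) * b := by
  have ha : 0 ≤ a := hb.trans hab
  have hv : 0 < δ + b := by linarith
  have hu : 0 < δ + a := by linarith
  have key1 : (p - 1) * (δ + a) ^ (p - 2) * (a - b) ≤ (δ + a) ^ (p - 1) - (δ + b) ^ (p - 1) := by
    have hb' : (1:ℝ) + (p-1) * ((δ+b) / (δ+a) - 1) ≥ ((δ+b)/(δ+a)) ^ (p-1) := by
      have h0 : (0:ℝ) ≤ (δ+b)/(δ+a) := by positivity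
      have := rpow_one_add_le_one_add_mul_self (s := (δ+b)/(δ+a) - 1) (by linarith)
        (p := p - 1) (by linarith) (by linarith)
      simpa using this
    have hur : 0 < (δ+a) ^ (p-1) := rpow_pos_of_pos hu _
    have h2 : ((δ+b)/(δ+a)) ^ (p-1) * (δ+a) ^ (p-1) = (δ+b) ^ (p-1) := by
      rw [← Real.mul_rpow (by positivity) hu.le, div_mul_cancel₀ _ hu.ne']
    have h3 : (δ+a) ^ (p - 2) * (δ+a) = (δ+a) ^ (p-1) := by
      rw [← Real.rpow_add_one hu.ne']; ring_nf
    have h4 : (δ+a) ^ (p-1) * ((δ+b) / (δ+a)) = (δ+a) ^ (p-2) * (δ+b) := by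
      rw [← h3]; field_simp
    nlinarith [mul_le_mul_of_nonneg_right hb' hur.le]
  have key2 : (δ + a) ^ (p - 2) ≤ (δ + b) ^ (p - 2) :=
    Real.rpow_le_rpow_of_nonpos hv (by linarith) (by linarith)
  have key3 : (δ + a + b) ^ (p - 2) ≤ (δ + a) ^ (p - 2) :=
    Real.rpow_le_rpow_of_nonpos hu (by linarith) (by linarith)
  have e1 : (δ + a) ^ (p - 2) * (δ + a) = (δ + a) ^ (p - 1) := by
    rw [← Real.rpow_add_one hu.ne']; ring_nf
  have e2 : (δ + b) ^ (p - 2) * (δ + b) = (δ + b) ^ (p - 1) := by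
    rw [← Real.rpow_add_one hv.ne']; ring_nf
  have step : (p - 1) * (δ + a + b) ^ (p - 2) * (a - b)
      ≤ (p - 1) * (δ + a) ^ (p - 2) * (a - b) := by
    have := mul_le_mul_of_nonneg_right
      (mul_le_mul_of_nonneg_left key3 (by linarith : (0:ℝ) ≤ p - 1))
      (by linarith : (0:ℝ) ≤ a - b)
    linarith
  nlinarith [key2, hδ.le]

lemma scalarUpper {p δ a b d : ℝ} (hp1 : 1 < p) (hp2 : p ≤ 2) (hδ : 0 < δ)
    (hb : 0 ≤ b) (hab : b ≤ a) (hd : a - b ≤ d) (hd0 : 0 ≤ d) :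
    (δ + a) ^ (p - 2) * d + ((δ + b) ^ (p - 2) - (δ + a) ^ (p - 2)) * b
      ≤ 6 * (δ + a + b) ^ (p - 2) * d := by
  have ha : 0 ≤ a := hb.trans hab
  have hv : 0 < δ + b := by linarith
  have hu : 0 < δ + a := by linarith
  have hw : 0 < δ + a + b := by linarith
  have hγ : 0 < (δ + a + b) ^ (p - 2) := rpow_pos_of_pos hw _
  -- α ≤ 2γ
  have hα2 : (δ + a) ^ (p - 2) ≤ 2 * (δ + a + b) ^ (p - 2) := by
    have h1 : (δ + a) ^ (p-2) ≤ ((δ + a + b)/2) ^ (p-2) :=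
      Real.rpow_le_rpow_of_nonpos (by positivity) (by linarith) (by linarith)
    have h2 : ((δ + a + b)/2) ^ (p-2) = (δ+a+b) ^ (p-2) / 2 ^ (p-2) :=
      Real.div_rpow hw.le (by norm_num) (p-2)
    have h34 : (1:ℝ)/2 ≤ (2:ℝ) ^ (p-2) := by
      rw [show (1:ℝ)/2 = (2:ℝ) ^ (-1:ℝ) by rw [Real.rpow_neg_one]; norm_num]
      exact Real.rpow_le_rpow_of_exponent_le (by norm_num) (by linarith)
    have h5 : (δ+a+b) ^ (p-2) / 2 ^ (p-2) ≤ (δ+a+b) ^ (p-2) / (1/2) :=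
      div_le_div_of_nonneg_left hγ.le (by norm_num) h34
    calc (δ + a) ^ (p-2) ≤ (δ+a+b) ^ (p-2) / 2 ^ (p-2) := by rw [← h2]; exact h1
      _ ≤ (δ+a+b) ^ (p-2) / (1/2) := h5
      _ = 2 * (δ+a+b) ^ (p-2) := by ring
  -- T ≤ 4 γ d
  have hT : ((δ + b) ^ (p - 2) - (δ + a) ^ (p - 2)) * b ≤ 4 * (δ + a + b) ^ (p - 2) * d := by
    rcases le_total a (2*b) with hcase | hcase
    · -- a ≤ 2b
      have htan := rpow_tangent_neg (q := p-2) (u := δ+a) (v := δ+b)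
        (by linarith) (by linarith) hv (by linarith)
      have hv1 : 0 < (δ+b) ^ (p - 2 - 1) := rpow_pos_of_pos hv _
      have h3 : (δ+b) ^ (p-2-1) * (δ+b) = (δ+b) ^ (p-2) := by
        rw [← Real.rpow_add_one hv.ne']; ring_nf
      have step1 : ((δ + b) ^ (p - 2) - (δ + a) ^ (p - 2)) * b
          ≤ (-(p-2)) * (δ+b) ^ (p-2-1) * (a - b) * (δ+b) := by
        have hub : (δ+a) - (δ+b) = a - b := by ring
        rw [hub] at htan
        have hbv : b ≤ δ + b := by linarith
        have hne : 0 ≤ (-(p-2)) * (δ+b) ^ (p-2-1) * (a-b) := by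
          apply mul_nonneg (mul_nonneg (by linarith) hv1.le) (by linarith)
        nlinarith [mul_le_mul_of_nonneg_right htan hb]
      have step2 : (-(p-2)) * (δ+b) ^ (p-2-1) * (a - b) * (δ+b) ≤ (δ+b) ^ (p-2) * (a-b) := by
        have : (-(p-2)) * (δ+b) ^ (p-2-1) * (a - b) * (δ+b)
            = (-(p-2)) * ((δ+b) ^ (p-2) * (a-b)) := by rw [← h3]; ring
        rw [this]
        have h6 : 0 ≤ (δ+b) ^ (p-2) * (a-b) :=
          mul_nonneg (rpow_pos_of_pos hv _).le (by linarith)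
        nlinarith
      have hv3 : (δ+b) ^ (p-2) ≤ 3 * (δ+a+b) ^ (p-2) := by
        have h1 : (δ + b) ^ (p-2) ≤ ((δ + a + b)/3) ^ (p-2) :=
          Real.rpow_le_rpow_of_nonpos (by positivity) (by linarith) (by linarith)
        have h2 : ((δ + a + b)/3) ^ (p-2) = (δ+a+b) ^ (p-2) / 3 ^ (p-2) :=
          Real.div_rpow hw.le (by norm_num) (p-2)
        have h34 : (1:ℝ)/3 ≤ (3:ℝ) ^ (p-2) := by
          rw [show (1:ℝ)/3 = (3:ℝ) ^ (-1:ℝ) by rw [Real.rpow_neg_one]; norm_num]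
          exact Real.rpow_le_rpow_of_exponent_le (by norm_num) (by linarith)
        have h5 : (δ+a+b) ^ (p-2) / 3 ^ (p-2) ≤ (δ+a+b) ^ (p-2) / (1/3) :=
          div_le_div_of_nonneg_left hγ.le (by norm_num) h34
        calc (δ + b) ^ (p-2) ≤ (δ+a+b) ^ (p-2) / 3 ^ (p-2) := by rw [← h2]; exact h1
          _ ≤ (δ+a+b) ^ (p-2) / (1/3) := h5
          _ = 3 * (δ+a+b) ^ (p-2) := by ring
      have hab' : 0 ≤ a - b := by linarith
      calc ((δ + b) ^ (p - 2) - (δ + a) ^ (p - 2)) * b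
          ≤ (δ+b) ^ (p-2) * (a-b) := step1.trans step2
        _ ≤ 3 * (δ+a+b) ^ (p-2) * (a-b) := by nlinarith
        _ ≤ 4 * (δ+a+b) ^ (p-2) * d := by nlinarith
    · -- 2b ≤ a
      have hmono : (δ+b) ^ (p-2) * b ≤ (δ+a) ^ (p-2) * a := by
        have := scalarL3 hp1 hp2 hδ hb hab
        have h0 : 0 ≤ (p-1) * (δ+a+b) ^ (p-2) * (a-b) := by
          apply mul_nonneg (mul_nonneg (by linarith) hγ.le) (by linarith)
        linarith
      have hα0 : 0 < (δ+a) ^ (p-2) := rpow_pos_of_pos hu _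
      calc ((δ + b) ^ (p - 2) - (δ + a) ^ (p - 2)) * b
          ≤ (δ+b) ^ (p-2) * b := by nlinarith
        _ ≤ (δ+a) ^ (p-2) * a := hmono
        _ ≤ 2 * (δ+a+b) ^ (p-2) * a := by nlinarith
        _ ≤ 2 * (δ+a+b) ^ (p-2) * (2*(a-b)) := by nlinarith
        _ ≤ 4 * (δ+a+b) ^ (p-2) * d := by nlinarith
  have hαd : (δ + a) ^ (p - 2) * d ≤ 2 * (δ + a + b) ^ (p - 2) * d := by nlinarith
  linarith

lemma quadForm {p δ a b s : ℝ} (hp1 : 1 < p) (hp2 : p ≤ 2) (hδ : 0 < δ)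
    (hb : 0 ≤ b) (hab : b ≤ a) (hs1 : s ≤ a * b) (hs2 : -(a * b) ≤ s) :
    (p - 1) * (δ + a + b) ^ (p - 2) * (a^2 + b^2 - 2*s)
      ≤ (δ + a) ^ (p - 2) * a^2 + (δ + b) ^ (p - 2) * b^2
        - ((δ + a) ^ (p - 2) + (δ + b) ^ (p - 2)) * s := by
  have ha : 0 ≤ a := hb.trans hab
  have hv : 0 < δ + b := by linarith
  have hu : 0 < δ + a := by linarith
  have hw : 0 < δ + a + b := by linarith
  set α := (δ + a) ^ (p - 2) with hα
  set β := (δ + b) ^ (p - 2) with hβ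
  set γ := (δ + a + b) ^ (p - 2) with hγdef
  have hγ0 : 0 < γ := rpow_pos_of_pos hw _
  have hαγ : γ ≤ α := Real.rpow_le_rpow_of_nonpos hu (by linarith) (by linarith)
  have hβγ : γ ≤ β := Real.rpow_le_rpow_of_nonpos hv (by linarith) (by linarith)
  have hF : (p - 1) * γ * (a - b) ≤ α * a - β * b := scalarL3 hp1 hp2 hδ hb hab
  have E1 : (p - 1) * γ * (a - b)^2 ≤ α * a^2 + β * b^2 - (α + β) * (a * b) := by
    nlinarith [mul_le_mul_of_nonneg_right hF (by linarith : (0:ℝ) ≤ a - b)]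
  have E2 : (p - 1) * γ * (a + b)^2 ≤ α * a^2 + β * b^2 + (α + β) * (a * b) := by
    nlinarith [sq_nonneg (a+b), mul_nonneg ha hb, mul_nonneg (mul_nonneg hγ0.le ha) hb,
      mul_nonneg hγ0.le (sq_nonneg (a+b))]
  rcases le_total 0 (α + β - 2 * (p - 1) * γ) with hc | hc
  · nlinarith [mul_nonneg (by linarith : (0:ℝ) ≤ a*b - s) hc]
  · nlinarith [mul_nonneg (by linarith : (0:ℝ) ≤ s + a*b) (by linarith : (0:ℝ) ≤ 2*(p-1)*γ - (α+β))]

lemma mainAux (p : ℝ) (hp1 : 1 < p) (hp2 : p ≤ 2) (δ : ℝ) (hδ : 0 < δ)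
    (A B : Fin 2 → Fin 2 → ℝ) (hba : frob B ≤ frob A) :
    (p - 1) * (δ + frob A + frob B) ^ (p - 2) * frob (A - B)
        ≤ frob (stressS δ p A - stressS δ p B) ∧
      frob (stressS δ p A - stressS δ p B)
        ≤ 6 * (δ + frob A + frob B) ^ (p - 2) * frob (A - B) := by
  have ha0 : 0 ≤ frob A := frob_nonneg A
  have hb0 : 0 ≤ frob B := frob_nonneg B
  set a := frob A with haa
  set b := frob B with hbb
  have hu : 0 < δ + a := by linarith
  have hv : 0 < δ + b := by linarith
  have hw : 0 < δ + a + b := by linarith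
  set α := (δ + a) ^ (p - 2) with hαd
  set β := (δ + b) ^ (p - 2) with hβd
  set γ := (δ + a + b) ^ (p - 2) with hγd
  have hα0 : 0 < α := rpow_pos_of_pos hu _
  have hβ0 : 0 < β := rpow_pos_of_pos hv _
  have hγ0 : 0 < γ := rpow_pos_of_pos hw _
  have hαβ : α ≤ β := Real.rpow_le_rpow_of_nonpos hv (by linarith) (by linarith)
  set x := Emb A with hxd
  set y := Emb B with hyd
  have hax : a = ‖x‖ := frob_eq A
  have hbx : b = ‖y‖ := frob_eq B
  have hfd : frob (A - B) = ‖x - y‖ := by rw [frob_eq, Emb_sub]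
  have hfS : frob (stressS δ p A - stressS δ p B) = ‖α • x - β • y‖ := by
    rw [frob_eq, Emb_sub, Emb_stress, Emb_stress]
  set d := ‖x - y‖ with hdd
  have hd0 : 0 ≤ d := norm_nonneg _
  have habd : a - b ≤ d := by
    rw [hax, hbx]; exact (norm_sub_norm_le x y).trans (le_refl _)
  constructor
  · -- lower bound
    rcases eq_or_lt_of_le hd0 with hd | hd
    · rw [hfd, ← hd]
      have h0 : 0 ≤ frob (stressS δ p A - stressS δ p B) := frob_nonneg _
      nlinarith
    · have hinner : (inner ℝ (α • x - β • y) (x - y) : ℝ)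
          = α * ‖x‖^2 + β * ‖y‖^2 - (α + β) * (inner ℝ x y : ℝ) := by
        rw [inner_sub_left, real_inner_smul_left, real_inner_smul_left,
          inner_sub_right, inner_sub_right, real_inner_self_eq_norm_sq,
          real_inner_self_eq_norm_sq, real_inner_comm y x]
        ring
      have hnorm : d^2 = ‖x‖^2 - 2 * (inner ℝ x y : ℝ) + ‖y‖^2 := norm_sub_sq_real x y
      have hs1 : (inner ℝ x y : ℝ) ≤ a * b := by rw [hax, hbx]; exact real_inner_le_norm x y
      have hs2 : -(a * b) ≤ (inner ℝ x y : ℝ) := by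
        have h1 := abs_real_inner_le_norm x y
        have h2 := neg_abs_le (inner ℝ x y : ℝ)
        rw [hax, hbx]; linarith
      have hq := quadForm hp1 hp2 hδ hb0 hba hs1 hs2
      have hle : (p - 1) * γ * d^2 ≤ ‖α • x - β • y‖ * d := by
        calc (p - 1) * γ * d^2
            = (p - 1) * γ * (a^2 + b^2 - 2 * (inner ℝ x y : ℝ)) := by
              rw [hnorm, hax, hbx]; ring
          _ ≤ α * a^2 + β * b^2 - (α + β) * (inner ℝ x y : ℝ) := hq
          _ = (inner ℝ (α • x - β • y) (x - y) : ℝ) := by rw [hinner, hax, hbx]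
          _ ≤ ‖α • x - β • y‖ * ‖x - y‖ := real_inner_le_norm _ _
      rw [hfd, hfS]
      refine le_of_mul_le_mul_right ?_ hd
      calc (p - 1) * γ * d * d = (p - 1) * γ * d^2 := by ring
        _ ≤ ‖α • x - β • y‖ * d := hle
  · -- upper bound
    rw [hfd, hfS]
    have hsplit : α • x - β • y = α • (x - y) + (α - β) • y := by
      rw [smul_sub, sub_smul]; abel
    calc ‖α • x - β • y‖ ≤ ‖α • (x - y)‖ + ‖(α - β) • y‖ := by
          rw [hsplit]; exact norm_add_le _ _
      _ = α * d + (β - α) * b := by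
          rw [norm_smul, norm_smul, Real.norm_eq_abs, Real.norm_eq_abs,
            abs_of_pos hα0, abs_of_nonpos (by linarith), hbx]; ring
      _ ≤ 6 * γ * d := scalarUpper hp1 hp2 hδ hb0 hba habd hd0

/-- For `p ∈ (1,2]` there are `c₀, c₁ > 0` depending only on `p` such that for all
`δ > 0` and symmetric 2×2 matrices `A, B`,
`c₀ (δ+|A|+|B|)^(p-2)|A-B| ≤ |S(A)-S(B)| ≤ c₁ (δ+|A|+|B|)^(p-2)|A-B|`. -/
theorem stress_difference_equivalence (p : ℝ) (hp1 : 1 < p) (hp2 : p ≤ 2) :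
    ∃ c₀ c₁ : ℝ, 0 < c₀ ∧ 0 < c₁ ∧ ∀ δ : ℝ, 0 < δ →
      ∀ A B : Fin 2 → Fin 2 → ℝ, (∀ i j, A i j = A j i) → (∀ i j, B i j = B j i) →
        c₀ * (δ + frob A + frob B) ^ (p - 2) * frob (A - B) ≤
            frob (stressS δ p A - stressS δ p B) ∧
          frob (stressS δ p A - stressS δ p B) ≤
            c₁ * (δ + frob A + frob B) ^ (p - 2) * frob (A - B) := by
  refine ⟨p - 1, 6, by linarith, by norm_num, fun δ hδ A B _ _ => ?_⟩
  rcases le_total (frob B) (frob A) with h | h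
  · exact mainAux p hp1 hp2 δ hδ A B h
  · have key := mainAux p hp1 hp2 δ hδ B A h
    have e1 : frob (A - B) = frob (B - A) := by
      rw [frob_eq, frob_eq, Emb_sub, Emb_sub, norm_sub_rev]
    have e2 : frob (stressS δ p A - stressS δ p B)
        = frob (stressS δ p B - stressS δ p A) := by
      rw [frob_eq, frob_eq, Emb_sub, Emb_sub, norm_sub_rev]
    have e3 : δ + frob A + frob B = δ + frob B + frob A := by ring
    rw [e1, e2, e3]
    exact key
end
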